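/- Under Assumptions (A1) and (A3), let M₁^{ε,δ}(s) := (1/ε)·κ'(x(s))·f(x(π_δ(s)))·(s − π_δ(s)). Then for every integer p ≥ 1 and every c ≥ 0 there exists a constant C > 0, independent of t, ε and δ, such that for all ε, δ ∈ (0,1) and all t ≥ 0: |∫₀ᵗ E(s,t)·( M₁^{ε,δ}(s) − (c/2)·κ'(x(s))·f(x(s)) ) ds|^p ≤ C·|δ/ε − c|^p + C·δ^{2p}/ε^p. -/

import Mathlib

open Set MeasureTheory intervalIntegral

/-- The sampling map `π_δ(t) = δ·⌊t/δ⌋`. -/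
noncomputable def piD (δ t : ℝ) : ℝ := δ * (⌊t / δ⌋ : ℤ)

lemma piD_le {δ : ℝ} (hδ : 0 < δ) (s : ℝ) : piD δ s ≤ s := by
  have := Int.floor_le (s / δ)
  calc δ * (⌊s/δ⌋:ℤ) ≤ δ * (s/δ) := by nlinarith
  _ = s := by field_simp

lemma sub_piD_lt {δ : ℝ} (hδ : 0 < δ) (s : ℝ) : s - piD δ s < δ := by
  have := Int.lt_floor_add_one (s / δ)
  have h2 : s / δ * δ < ((⌊s/δ⌋:ℤ) + 1) * δ := by nlinarith
  have : s < δ * ⌊s/δ⌋ + δ := by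
    have h3 : s / δ * δ = s := by field_simp
    nlinarith
  unfold piD; linarith

lemma piD_nonneg {δ : ℝ} (hδ : 0 < δ) {s : ℝ} (hs : 0 ≤ s) : 0 ≤ piD δ s := by
  have : (0:ℤ) ≤ ⌊s/δ⌋ := Int.floor_nonneg.2 (by positivity)
  unfold piD
  have : (0:ℝ) ≤ (⌊s/δ⌋:ℤ) := by exact_mod_cast this
  nlinarith

lemma piD_zero (δ : ℝ) : piD δ 0 = 0 := by
  unfold piD; norm_num

lemma sub_piD_eq_fract {δ : ℝ} (hδ : 0 < δ) (s : ℝ) :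
    s - piD δ s = δ * Int.fract (s / δ) := by
  unfold piD Int.fract
  field_simp

/-- workhorse: measurable + bounded on `Ioc 0 t` implies interval integrable. -/
lemma ii_of_bdd {t M : ℝ} (ht : 0 ≤ t) {φ : ℝ → ℝ}
    (hm : AEStronglyMeasurable φ (volume.restrict (Ioc (0:ℝ) t)))
    (hb : ∀ s ∈ Ioc (0:ℝ) t, |φ s| ≤ M) :
    IntervalIntegrable φ volume 0 t := by
  rw [intervalIntegrable_iff_integrableOn_Ioc_of_le ht]
  refine ⟨hm, HasFiniteIntegral.restrict_of_bounded (C := M)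
    (by simp [measure_Ioc_lt_top]) ?_⟩
  filter_upwards [ae_restrict_mem measurableSet_Ioc] with s hs
  simpa [Real.norm_eq_abs] using hb s hs

/-- bound of a continuous function on a compact ball -/
lemma cont_bdd {φ : ℝ → ℝ} (hφ : Continuous φ) (R : ℝ) :
    ∃ M : ℝ, 0 ≤ M ∧ ∀ y : ℝ, |y| ≤ R → |φ y| ≤ M := by
  obtain ⟨M, hM⟩ := (isCompact_Icc (a := -R) (b := R)).exists_bound_of_continuousOn
    hφ.continuousOn
  exact ⟨max M 0, le_max_right _ _, fun y hy => le_trans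
    (by simpa [Real.norm_eq_abs] using hM y (abs_le.1 hy)) (le_max_left _ _)⟩

noncomputable def Phi (δ s : ℝ) : ℝ := (s - piD δ s) * (s - piD δ s - δ) / (2*δ)

lemma phi_zero (δ : ℝ) : Phi δ 0 = 0 := by simp [Phi, piD_zero]

lemma phi_abs_le {δ : ℝ} (hδ : 0 < δ) (s : ℝ) : |Phi δ s| ≤ δ / 2 := by
  have h1 : 0 ≤ s - piD δ s := by have := piD_le hδ s; linarith
  have h2 : s - piD δ s < δ := sub_piD_lt hδ s
  rw [Phi, abs_div, abs_mul]
  rw [abs_of_nonneg h1, abs_of_nonpos (by linarith), abs_of_nonneg (by linarith)]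
  rw [div_le_iff₀ (by linarith)]
  nlinarith

lemma phi_continuous {δ : ℝ} (hδ : 0 < δ) : Continuous (Phi δ) := by
  have h0 : Continuous fun s : ℝ => (fun y : ℝ => δ * y * (y - 1) / 2) (Int.fract s) := by
    exact ContinuousOn.comp_fract'' (f := fun y : ℝ => δ * y * (y - 1) / 2)
      (Continuous.continuousOn (by continuity)) (by norm_num)
  have : Phi δ = (fun s : ℝ => (fun y : ℝ => δ * y * (y - 1) / 2) (Int.fract s)) ∘
      (fun s : ℝ => s / δ) := by
    funext s
    have h1 := sub_piD_eq_fract hδ s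
    simp only [Function.comp, Phi]
    rw [h1]
    field_simp
  rw [this]
  exact h0.comp (continuous_id.div_const δ)

lemma phi_hasDerivWithinAt {δ : ℝ} (hδ : 0 < δ) (s : ℝ) :
    HasDerivWithinAt (Phi δ) ((s - piD δ s)/δ - 1/2) (Ioi s) s := by
  set a := piD δ s with ha
  have has : a ≤ s := piD_le hδ s
  have hsa : s < a + δ := by have := sub_piD_lt hδ s; linarith
  have hq : ∀ u ∈ Ico a (a + δ), piD δ u = a := by
    intro u hu
    have hfl : ⌊u / δ⌋ = ⌊s / δ⌋ := by
      rw [Int.floor_eq_iff]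
      constructor
      · rw [le_div_iff₀ hδ]
        have : (⌊s/δ⌋ : ℝ) * δ = a := by rw [ha]; unfold piD; ring
        linarith [hu.1]
      · rw [div_lt_iff₀ hδ]
        have : ((⌊s/δ⌋:ℝ) + 1) * δ = a + δ := by rw [ha]; unfold piD; ring
        linarith [hu.2]
    unfold piD; rw [hfl]; rw [ha]; rfl
  set q : ℝ → ℝ := fun u => (u - a) * (u - a - δ) / (2*δ) with hqdef
  have hmem : Ico a (a + δ) ∈ nhdsWithin s (Ioi s) := by
    rw [mem_nhdsWithin]
    exact ⟨Iio (a + δ), isOpen_Iio, hsa, fun u hu => ⟨le_trans has (le_of_lt hu.2), hu.1⟩⟩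
  have heq : ∀ u ∈ Ico a (a+δ), Phi δ u = q u := by
    intro u hu; rw [Phi, hq u hu]
  have hqd : HasDerivAt q ((s - a)/δ - 1/2) s := by
    have h1 : HasDerivAt (fun u : ℝ => (u - a) * (u - a - δ)) ((s - a - δ) + (s - a)) s := by
      have := ((hasDerivAt_id s).sub_const a).mul ((hasDerivAt_id s).sub_const (a + δ))
      simpa [sub_sub, mul_comm, Pi.mul_def] using this
    have := h1.div_const (2*δ)
    refine this.congr_deriv ?_
    field_simp
    ring
  refine (hqd.hasDerivWithinAt).congr_of_eventuallyEq ?_ (heq s ⟨has, hsa⟩)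
  filter_upwards [hmem] with u hu
  exact heq u hu

lemma traj_bdd (f κ : ℝ → ℝ) (x : ℝ → ℝ) (x₀ lam γ : ℝ) (hlam : 0 < lam)
    (hcontr : ∀ a b : ℝ, (a - b) * (f a - f b) ≤ -lam * (a - b) ^ 2)
    (hκbd : ∀ a : ℝ, |κ a| ≤ γ) (hx0 : x 0 = x₀) {T : ℝ}
    (hc : ContinuousOn x (Icc 0 T))
    (hd : ∀ s ∈ Ioo 0 T, HasDerivAt x (f (x s) + κ (x s)) s) :
    ∀ s ∈ Icc 0 T, |x s| ≤ max |x₀| ((|f 0| + γ)/lam) := by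
  set M₀ := max |x₀| ((|f 0| + γ)/lam) with hM₀def
  have hγ0 : 0 ≤ γ := le_trans (abs_nonneg _) (hκbd 0)
  have hM₀ : 0 ≤ M₀ := le_trans (abs_nonneg x₀) (le_max_left _ _)
  intro t₁ ht₁
  by_contra hcon
  push_neg at hcon
  set v : ℝ → ℝ := fun s => (x s) ^ 2 with hvdef
  have hvc : ContinuousOn v (Icc 0 T) := hc.pow 2
  set K := Icc (0:ℝ) t₁ ∩ v ⁻¹' (Iic (M₀^2)) with hKdef
  have hKcl : IsClosed K :=
    (hvc.mono (Icc_subset_Icc le_rfl ht₁.2)).preimage_isClosed_of_isClosed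
      isClosed_Icc isClosed_Iic
  have hK0 : (0:ℝ) ∈ K := by
    constructor
    · exact ⟨le_refl _, ht₁.1⟩
    · simp only [mem_preimage, mem_Iic, hvdef]
      rw [hx0]
      calc x₀ ^ 2 = |x₀| ^ 2 := (sq_abs _).symm
      _ ≤ M₀ ^ 2 := pow_le_pow_left₀ (abs_nonneg _) (le_max_left _ _) 2
  have hKbdd : BddAbove K := (bddAbove_Icc).mono (inter_subset_left)
  set u := sSup K with hudef
  have huK : u ∈ K := hKcl.csSup_mem ⟨0, hK0⟩ hKbdd
  have hvt₁ : M₀ ^ 2 < v t₁ := by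
    have : M₀ < |x t₁| := hcon
    calc M₀ ^ 2 < |x t₁| ^ 2 := by
          apply pow_lt_pow_left₀ this hM₀; norm_num
    _ = v t₁ := sq_abs _
  have hut₁ : u < t₁ := by
    rcases lt_or_eq_of_le huK.1.2 with h | h
    · exact h
    · exfalso; have := huK.2; rw [h] at this; simp only [mem_preimage, mem_Iic] at this; linarith
  have hvgt : ∀ s ∈ Ioc u t₁, M₀ ^ 2 < v s := by
    intro s hs
    by_contra hle
    push_neg at hle
    have : s ∈ K := ⟨⟨le_trans (le_trans huK.1.1 (le_of_lt hs.1)) le_rfl, hs.2⟩, hle⟩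
    exact absurd (le_csSup hKbdd this) (not_le.2 hs.1)
  have hanti : StrictAntiOn v (Icc u t₁) := by
    apply strictAntiOn_of_deriv_neg (convex_Icc _ _)
    · exact hvc.mono (Icc_subset_Icc huK.1.1 ht₁.2)
    · intro s hs
      rw [interior_Icc] at hs
      have hs0T : s ∈ Ioo 0 T :=
        ⟨lt_of_le_of_lt huK.1.1 hs.1, lt_of_lt_of_le hs.2 ht₁.2⟩
      have hxd := hd s hs0T
      have hvd : HasDerivAt v (2 * x s * (f (x s) + κ (x s))) s := by
        have := hxd.pow 2
        simpa [hvdef, Pi.pow_def] using this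
      rw [hvd.deriv]
      set y := x s with hy
      have hvy : M₀ ^ 2 < y ^ 2 := hvgt s ⟨hs.1, le_of_lt hs.2⟩
      have hya : M₀ < |y| := by
        by_contra hle
        push_neg at hle
        have : |y| ^ 2 ≤ M₀ ^ 2 := pow_le_pow_left₀ (abs_nonneg _) hle 2
        rw [sq_abs] at this; linarith
      have hypos : 0 < |y| := lt_of_le_of_lt hM₀ hya
      have h1 : y * (f y - f 0) ≤ -lam * y ^ 2 := by
        have := hcontr y 0; simpa using this
      have h2 : y * f 0 ≤ |y| * |f 0| := by
        calc y * f 0 ≤ |y * f 0| := le_abs_self _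
        _ = |y| * |f 0| := abs_mul _ _
      have h3 : y * κ y ≤ |y| * γ := by
        calc y * κ y ≤ |y * κ y| := le_abs_self _
        _ = |y| * |κ y| := abs_mul _ _
        _ ≤ |y| * γ := by
              apply mul_le_mul_of_nonneg_left (hκbd y) (abs_nonneg _)
      have h4 : (|f 0| + γ) / lam < |y| := lt_of_le_of_lt (le_max_right _ _) hya
      have h5 : |f 0| + γ < lam * |y| := by
        rw [div_lt_iff₀ hlam] at h4; linarith [h4]
      have h6 : |y| * (|f 0| + γ) < lam * y ^ 2 := by
        have := mul_lt_mul_of_pos_left h5 hypos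
        calc |y| * (|f 0| + γ) < |y| * (lam * |y|) := this
        _ = lam * y ^ 2 := by rw [← sq_abs]; ring
      nlinarith [h1, h2, h3, h6]
  have : v t₁ < v u :=
    hanti ⟨le_refl u, le_of_lt hut₁⟩ ⟨le_of_lt hut₁, le_refl t₁⟩ hut₁
  have hvu : v u ≤ M₀ ^ 2 := huK.2
  linarith

section Bootstrap

variable (f κ : ℝ → ℝ) (x : ℝ → ℝ) (x₀ lam γ : ℝ)

/-- Continuity of `x` on `[0,t]` from integrability of the vector field. -/
lemma cont_of_mem (hx : ∀ t : ℝ, 0 ≤ t → x t = x₀ + ∫ s in (0:ℝ)..t, (f (x s) + κ (x s)))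
    {t : ℝ} (ht : 0 ≤ t)
    (hI : IntervalIntegrable (fun s => f (x s) + κ (x s)) volume 0 t) :
    ContinuousOn x (Icc 0 t) := by
  have hprim : ContinuousOn (fun r => x₀ + ∫ s in (0:ℝ)..r, (f (x s) + κ (x s))) (Icc 0 t) := by
    have := continuousOn_primitive_interval' hI (left_mem_uIcc)
    rw [uIcc_of_le ht] at this
    exact continuousOn_const.add this
  exact hprim.congr fun r hr => hx r hr.1

/-- Differentiability of `x` on `(0,t)`. -/
lemma deriv_of_mem (hfc : Continuous f) (hκc : Continuous κ)
    (hx : ∀ t : ℝ, 0 ≤ t → x t = x₀ + ∫ s in (0:ℝ)..t, (f (x s) + κ (x s)))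
    {t : ℝ} (ht : 0 ≤ t)
    (hI : IntervalIntegrable (fun s => f (x s) + κ (x s)) volume 0 t) :
    ∀ s ∈ Ioo 0 t, HasDerivAt x (f (x s) + κ (x s)) s := by
  intro s hs
  set g : ℝ → ℝ := fun r => f (x r) + κ (x r) with hg
  have hxc : ContinuousOn x (Icc 0 t) := cont_of_mem f κ x x₀ hx ht hI
  have hgc : ContinuousOn g (Icc 0 t) :=
    (hfc.comp_continuousOn hxc).add (hκc.comp_continuousOn hxc)
  have hgs : ContinuousAt g s :=
    (hgc s (Ioo_subset_Icc_self hs)).continuousAt (Icc_mem_nhds hs.1 hs.2)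
  have hIs : IntervalIntegrable g volume 0 s :=
    hI.mono_set (uIcc_subset_uIcc left_mem_uIcc
      (by rw [uIcc_of_le ht]; exact Ioo_subset_Icc_self hs))
  have hmeas : StronglyMeasurableAtFilter g (nhds s) volume := by
    refine ⟨Ioo 0 t, Ioo_mem_nhds hs.1 hs.2, ?_⟩
    exact (hgc.mono Ioo_subset_Icc_self).aestronglyMeasurable measurableSet_Ioo
  have hprim : HasDerivAt (fun r => x₀ + ∫ u in (0:ℝ)..r, g u) (g s) s :=
    (intervalIntegral.integral_hasDerivAt_right hIs hmeas hgs).const_add x₀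
  apply hprim.congr_of_eventuallyEq
  filter_upwards [Ioo_mem_nhds hs.1 hs.2] with r hr
  exact hx r (le_of_lt hr.1)

set_option maxHeartbeats 1000000 in
/-- Bootstrap: the vector field along the trajectory is locally integrable on `[0,∞)`. -/
lemma bootstrap (hlam : 0 < lam) (hfc : Continuous f) (hκc : Continuous κ)
    (hcontr : ∀ a b : ℝ, (a - b) * (f a - f b) ≤ -lam * (a - b) ^ 2)
    (hκbd : ∀ a : ℝ, |κ a| ≤ γ)
    (hx : ∀ t : ℝ, 0 ≤ t → x t = x₀ + ∫ s in (0:ℝ)..t, (f (x s) + κ (x s))) :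
    ∀ t : ℝ, 0 ≤ t → IntervalIntegrable (fun s => f (x s) + κ (x s)) volume 0 t := by
  set g : ℝ → ℝ := fun r => f (x r) + κ (x r) with hg
  have hx0 : x 0 = x₀ := by simpa using hx 0 le_rfl
  set S : Set ℝ := {t | 0 ≤ t ∧ IntervalIntegrable g volume 0 t} with hS
  have hS0 : (0:ℝ) ∈ S := ⟨le_rfl, IntervalIntegrable.refl⟩
  have hdown : ∀ t ∈ S, ∀ s : ℝ, 0 ≤ s → s ≤ t → s ∈ S := by
    intro t htS s hs hst
    exact ⟨hs, htS.2.mono_set (uIcc_subset_uIcc left_mem_uIcc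
      (by rw [uIcc_of_le htS.1]; exact ⟨hs, hst⟩))⟩
  set M₀ := max |x₀| ((|f 0| + γ)/lam) with hM₀
  obtain ⟨MF, hMF0, hMF⟩ := cont_bdd (φ := fun y => f y + κ y) (hfc.add hκc) M₀
  have hbd : ∀ t ∈ S, ∀ s ∈ Icc 0 t, |x s| ≤ M₀ := by
    intro t htS
    exact traj_bdd f κ x x₀ lam γ hlam hcontr hκbd hx0
      (cont_of_mem f κ x x₀ hx htS.1 htS.2)
      (deriv_of_mem f κ x x₀ hfc hκc hx htS.1 htS.2)
  by_contra hcon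
  push_neg at hcon
  obtain ⟨T, hT0, hTn⟩ := hcon
  have hbddS : BddAbove S := by
    refine ⟨T, fun t htS => ?_⟩
    by_contra hlt
    push_neg at hlt
    exact hTn (hdown t htS T hT0 (le_of_lt hlt)).2
  set T₀ := sSup S with hT₀
  have hT₀0 : 0 ≤ T₀ := le_csSup hbddS hS0
  have hcoIco : ContinuousOn x (Ico 0 T₀) := by
    intro s hs
    obtain ⟨t, htS, hst⟩ := exists_lt_of_lt_csSup ⟨0, hS0⟩ hs.2
    have := (cont_of_mem f κ x x₀ hx htS.1 htS.2) s ⟨hs.1, le_of_lt hst⟩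
    apply this.mono_of_mem_nhdsWithin
    rw [mem_nhdsWithin]
    exact ⟨Iio t, isOpen_Iio, hst, fun u hu => ⟨hu.2.1, le_of_lt hu.1⟩⟩
  have hbdIco : ∀ s ∈ Ico 0 T₀, |x s| ≤ M₀ := by
    intro s hs
    obtain ⟨t, htS, hst⟩ := exists_lt_of_lt_csSup ⟨0, hS0⟩ hs.2
    exact hbd t htS s ⟨hs.1, le_of_lt hst⟩
  have hT₀S : T₀ ∈ S := by
    refine ⟨hT₀0, ?_⟩
    rw [intervalIntegrable_iff_integrableOn_Ioc_of_le hT₀0,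
      integrableOn_Ioc_iff_integrableOn_Ioo]
    have hgm : AEStronglyMeasurable g (volume.restrict (Ioo (0:ℝ) T₀)) :=
      (((hfc.add hκc).comp_continuousOn (hcoIco.mono Ioo_subset_Ico_self)).aestronglyMeasurable
        measurableSet_Ioo)
    refine ⟨hgm, HasFiniteIntegral.restrict_of_bounded (C := MF)
      (by simp [measure_Ioo_lt_top]) ?_⟩
    filter_upwards [ae_restrict_mem measurableSet_Ioo] with s hs
    simpa [Real.norm_eq_abs] using hMF (x s) (hbdIco s (Ioo_subset_Ico_self hs))
  have hxconst : ∀ r : ℝ, T₀ < r → x r = x₀ := by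
    intro r hr
    have hrS : r ∉ S := fun hrS => absurd (le_csSup hbddS hrS) (not_le.2 hr)
    have hr0 : (0:ℝ) ≤ r := le_trans hT₀0 (le_of_lt hr)
    have : ¬ IntervalIntegrable g volume 0 r := fun h => hrS ⟨hr0, h⟩
    rw [hx r hr0, intervalIntegral.integral_undef this, add_zero]
  have hnext : T₀ + 1 ∈ S := by
    refine ⟨by linarith, hT₀S.2.trans ?_⟩
    rw [intervalIntegrable_iff_integrableOn_Ioc_of_le (by linarith : T₀ ≤ T₀ + 1)]
    have heq : EqOn g (fun _ => f x₀ + κ x₀) (Ioc T₀ (T₀+1)) := by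
      intro r hr
      simp only [hg]
      rw [hxconst r hr.1]
    rw [integrableOn_congr_fun heq measurableSet_Ioc]
    exact integrableOn_const (by simp [measure_Ioc_lt_top])
  have := le_csSup hbddS hnext
  linarith

end Bootstrap

lemma int_bd {t M CS : ℝ} (ht : 0 ≤ t) (hM : 0 ≤ M) (φ Efn : ℝ → ℝ)
    (hEnn : ∀ s, 0 ≤ Efn s)
    (hb : ∀ s ∈ Ioc (0:ℝ) t, |φ s| ≤ M * Efn s)
    (hE : IntervalIntegrable Efn volume 0 t)
    (hCS : (∫ s in (0:ℝ)..t, Efn s) ≤ CS) :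
    |∫ s in (0:ℝ)..t, φ s| ≤ M * CS := by
  have h1 : ‖∫ s in (0:ℝ)..t, φ s‖ ≤ |∫ s in (0:ℝ)..t, M * Efn s| := by
    apply intervalIntegral.norm_integral_le_abs_of_norm_le ?_ (hE.const_mul M)
    rw [uIoc_of_le ht]
    filter_upwards [ae_restrict_mem measurableSet_Ioc] with s hs
    simpa [Real.norm_eq_abs] using hb s hs
  have hnn : 0 ≤ ∫ s in (0:ℝ)..t, Efn s :=
    intervalIntegral.integral_nonneg ht (fun u _ => hEnn u)
  rw [intervalIntegral.integral_const_mul, abs_of_nonneg (mul_nonneg hM hnn)] at h1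
  calc |∫ s in (0:ℝ)..t, φ s| ≤ M * ∫ s in (0:ℝ)..t, Efn s := h1
  _ ≤ M * CS := mul_le_mul_of_nonneg_left hCS hM

set_option maxHeartbeats 2000000 in
/-- Uniform-in-time bound for the term `M₁^{ε,δ}` against the effective
drift `(c/2)·κ'(x)·f(x)`, where `M₁^{ε,δ}(s) = (1/ε)·κ'(x(s))·f(x(π_δ(s)))·(s − π_δ(s))`
and `E(s,t) = exp(∫ₛᵗ (f'(x(u)) + κ'(x(u))) du)`. -/
theorem stmt5
    (f κ : ℝ → ℝ) (x₀ : ℝ) (x : ℝ → ℝ)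
    -- Assumption (A1)
    (lam ξ μ Lκ γ : ℝ) (q : ℕ)
    (hlam : 0 < lam) (hξ : 0 < ξ) (hμ : 0 < μ) (hLκ : 0 < Lκ) (hγ : 0 < γ)
    (hcontr : ∀ a b : ℝ, (a - b) * (f a - f b) ≤ -lam * (a - b) ^ 2)
    (hfLip : ∀ a b : ℝ, |f a - f b| ≤ (ξ * (|a| ^ q + |b| ^ q) + μ) * |a - b|)
    (hκLip : ∀ a b : ℝ, |κ a - κ b| ≤ Lκ * |a - b|)
    (hgap : lam / 2 - Lκ > 0)
    (hκbd : ∀ a : ℝ, |κ a| ≤ γ)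
    -- Assumption (A3)
    (hfd : Differentiable ℝ f) (hfd2 : Differentiable ℝ (deriv f))
    (hκd : Differentiable ℝ κ) (hκd2 : Differentiable ℝ (deriv κ))
    (K : ℝ) (hK : ∀ y : ℝ, |deriv (deriv κ) y| ≤ K)
    (cf : ℝ) (rf : ℕ) (hf2 : ∀ y : ℝ, |deriv (deriv f) y| ≤ cf * (1 + |y| ^ rf))
    (Cstar : ℝ) (hCstar : 0 < Cstar)
    (hint : ∀ m : ℕ, (m = 1 ∨ m = 2) → ∀ t : ℝ, 0 ≤ t →
      (∫ s in (0:ℝ)..t,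
        Real.exp ((m : ℝ) * ∫ u in s..t, (deriv f (x u) + deriv κ (x u)))) ≤ Cstar)
    -- the closed-loop ODE `dx/dt = f(x) + κ(x)`, `x(0) = x₀`
    (hx : ∀ t : ℝ, 0 ≤ t → x t = x₀ + ∫ s in (0:ℝ)..t, (f (x s) + κ (x s)))
    :
    ∀ p : ℕ, 1 ≤ p → ∀ c : ℝ, 0 ≤ c →
      ∃ C : ℝ, 0 < C ∧ ∀ ε δ : ℝ, 0 < ε → ε < 1 → 0 < δ → δ < 1 → ∀ t : ℝ, 0 ≤ t →
        |∫ s in (0:ℝ)..t,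
            Real.exp (∫ u in s..t, (deriv f (x u) + deriv κ (x u))) *
              ((1 / ε) * deriv κ (x s) * f (x (piD δ s)) * (s - piD δ s)
                - (c / 2) * deriv κ (x s) * f (x s))| ^ p
          ≤ C * |δ / ε - c| ^ p + C * δ ^ (2 * p) / ε ^ p := by
  intro p hp c hc
  -- continuity of the data
  have hfc : Continuous f := hfd.continuous
  have hκc : Continuous κ := hκd.continuous
  have hf'c : Continuous (deriv f) := hfd2.continuous
  have hκ'c : Continuous (deriv κ) := hκd2.continuous
  set g : ℝ → ℝ := fun r => f (x r) + κ (x r) with hg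
  -- regularity of the trajectory
  have hii : ∀ t : ℝ, 0 ≤ t → IntervalIntegrable g volume 0 t :=
    bootstrap f κ x x₀ lam γ hlam hfc hκc hcontr hκbd hx
  have hx0 : x 0 = x₀ := by simpa using hx 0 le_rfl
  have hder : ∀ s : ℝ, 0 < s → HasDerivAt x (g s) s := by
    intro s hs
    exact deriv_of_mem f κ x x₀ hfc hκc hx (by linarith : (0:ℝ) ≤ s + 1)
      (hii (s+1) (by linarith)) s ⟨hs, by linarith⟩
  have hxc : ContinuousOn x (Ici 0) := by
    intro s hs
    have hs0 : (0:ℝ) ≤ s := hs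
    have h1 := cont_of_mem f κ x x₀ hx (by linarith : (0:ℝ) ≤ s + 1)
      (hii (s+1) (by linarith)) s ⟨hs0, by linarith⟩
    apply h1.mono_of_mem_nhdsWithin
    rw [mem_nhdsWithin]
    exact ⟨Iio (s+1), isOpen_Iio, mem_Iio.mpr (by linarith), fun u hu => ⟨hu.2, le_of_lt hu.1⟩⟩
  set M₀ := max |x₀| ((|f 0| + γ)/lam) with hM₀def
  have hM₀ : 0 ≤ M₀ := le_trans (abs_nonneg x₀) (le_max_left _ _)
  have hxbd : ∀ s : ℝ, 0 ≤ s → |x s| ≤ M₀ := by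
    intro s hs
    exact traj_bdd f κ x x₀ lam γ hlam hcontr hκbd hx0
      (cont_of_mem f κ x x₀ hx hs (hii s hs))
      (deriv_of_mem f κ x x₀ hfc hκc hx hs (hii s hs)) s ⟨hs, le_rfl⟩
  -- constants
  obtain ⟨Mf, hMf0, hMf⟩ := cont_bdd hfc M₀
  obtain ⟨Mκ, hMκ0, hMκ⟩ := cont_bdd hκ'c M₀
  obtain ⟨Mf', hMf'0, hMf'⟩ := cont_bdd hf'c M₀
  obtain ⟨MF, hMF0, hMF⟩ := cont_bdd (hfc.add hκc) M₀
  have hK0 : 0 ≤ K := le_trans (abs_nonneg _) (hK 0)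
  set Lf := ξ * (M₀^q + M₀^q) + μ with hLfdef
  have hLf0 : 0 ≤ Lf := by positivity
  have hLf : ∀ a b : ℝ, |a| ≤ M₀ → |b| ≤ M₀ → |f a - f b| ≤ Lf * |a - b| := by
    intro a b ha hb
    refine le_trans (hfLip a b) (mul_le_mul_of_nonneg_right ?_ (abs_nonneg _))
    have h1 : |a|^q ≤ M₀^q := pow_le_pow_left₀ (abs_nonneg _) ha q
    have h2 : |b|^q ≤ M₀^q := pow_le_pow_left₀ (abs_nonneg _) hb q
    rw [hLfdef]
    have : ξ * (|a|^q + |b|^q) ≤ ξ * (M₀^q + M₀^q) :=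
      mul_le_mul_of_nonneg_left (by linarith) (le_of_lt hξ)
    linarith
  set Mw := Mf' + Mκ with hMwdef
  set C₁ := Mκ * (Lf * MF) with hC₁def
  set C₂ := Mκ * Mf with hC₂def
  set C₃ := Mw * (Mκ * Mf) + (K * Mf + Mκ * Mf') * MF with hC₃def
  set C₄ := Mκ * Mf / 2 + C₃ * Cstar / 2 with hC₄def
  set C₅ := C₁ * Cstar + C₂ * Cstar + C₄ + 1 with hC₅def
  have hC₄0 : 0 ≤ C₄ := by positivity
  have hC₅0 : 0 < C₅ := by positivity
  refine ⟨C₅^p * 2^p + 1, by positivity, ?_⟩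
  intro ε δ hε hε1 hδ hδ1 t ht
  -- setup for fixed t
  set w : ℝ → ℝ := fun u => deriv f (x u) + deriv κ (x u) with hw
  set A : ℝ → ℝ := fun r => ∫ u in r..t, w u with hA
  have hIocIci : Ioc (0:ℝ) t ⊆ Ici 0 := fun u hu => le_of_lt hu.1
  have hIccIci : Icc (0:ℝ) t ⊆ Ici 0 := fun u hu => hu.1
  have hwc : ContinuousOn w (Ici 0) :=
    (hf'c.comp_continuousOn hxc).add (hκ'c.comp_continuousOn hxc)
  have hwbd : ∀ s : ℝ, 0 ≤ s → |w s| ≤ Mf' + Mκ := by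
    intro s hs
    calc |w s| ≤ |deriv f (x s)| + |deriv κ (x s)| := abs_add_le _ _
    _ ≤ Mf' + Mκ := add_le_add (hMf' _ (hxbd s hs)) (hMκ _ (hxbd s hs))
  have hwii : ∀ a b : ℝ, 0 ≤ a → 0 ≤ b → IntervalIntegrable w volume a b := by
    intro a b ha hb
    apply ContinuousOn.intervalIntegrable
    apply hwc.mono
    intro u hu
    rcases le_total a b with h | h
    · rw [uIcc_of_le h] at hu; exact le_trans ha hu.1
    · rw [uIcc_of_ge h] at hu; exact le_trans hb hu.1
  have hAeq : ∀ r : ℝ, 0 ≤ r → A r = (∫ u in (0:ℝ)..t, w u) - ∫ u in (0:ℝ)..r, w u := by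
    intro r hr
    rw [eq_sub_iff_add_eq, add_comm]
    exact intervalIntegral.integral_add_adjacent_intervals (hwii 0 r le_rfl hr)
      (hwii r t hr ht)
  have hprimc : ContinuousOn (fun r => ∫ u in (0:ℝ)..r, w u) (Icc 0 t) := by
    have := continuousOn_primitive_interval' (hwii 0 t le_rfl ht) left_mem_uIcc
    rwa [uIcc_of_le ht] at this
  have hAc : ContinuousOn A (Icc 0 t) :=
    (continuousOn_const.sub hprimc).congr fun r hr => hAeq r hr.1
  have hAd : ∀ s ∈ Ioo 0 t, HasDerivAt A (-(w s)) s := by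
    intro s hs
    have hca : ContinuousAt w s := (hwc.continuousAt (Ici_mem_nhds hs.1))
    have hmeas : StronglyMeasurableAtFilter w (nhds s) volume :=
      ⟨Ioi 0, Ioi_mem_nhds hs.1,
        (hwc.mono (fun u (hu : u ∈ Ioi 0) => le_of_lt hu)).aestronglyMeasurable
          measurableSet_Ioi⟩
    have hprimd : HasDerivAt (fun r => ∫ u in (0:ℝ)..r, w u) (w s) s :=
      intervalIntegral.integral_hasDerivAt_right (hwii 0 s le_rfl (le_of_lt hs.1))
        hmeas hca
    have h2 : HasDerivAt (fun r => (∫ u in (0:ℝ)..t, w u) - ∫ u in (0:ℝ)..r, w u)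
        (-(w s)) s := by
      simpa using hprimd.const_sub (∫ u in (0:ℝ)..t, w u)
    apply h2.congr_of_eventuallyEq
    filter_upwards [Ioo_mem_nhds hs.1 hs.2] with r hr
    exact hAeq r (le_of_lt hr.1)
  have hAt : A t = 0 := by rw [hA]; simp
  -- the exponential weight
  have hEc : ContinuousOn (fun s => Real.exp (A s)) (Icc 0 t) :=
    Real.continuous_exp.comp_continuousOn hAc
  have hEii : IntervalIntegrable (fun s => Real.exp (A s)) volume 0 t := by
    apply ContinuousOn.intervalIntegrable
    rwa [uIcc_of_le ht]
  have hECstar : (∫ s in (0:ℝ)..t, Real.exp (A s)) ≤ Cstar := by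
    have h := hint 1 (Or.inl rfl) t ht
    simpa [hA, hw] using h
  have hEnn : ∀ s : ℝ, 0 ≤ Real.exp (A s) := fun s => (Real.exp_pos _).le
  obtain ⟨ME, hME⟩ := (isCompact_Icc (a := (0:ℝ)) (b := t)).exists_bound_of_continuousOn hEc
  have hME' : ∀ s ∈ Ioc (0:ℝ) t, Real.exp (A s) ≤ ME := by
    intro s hs
    have := hME s (Ioc_subset_Icc_self hs)
    rwa [Real.norm_eq_abs, abs_of_pos (Real.exp_pos _)] at this
  have hME0 : 0 ≤ ME := le_trans (hEnn t) (by
    have := hME t ⟨ht, le_rfl⟩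
    rwa [Real.norm_eq_abs, abs_of_pos (Real.exp_pos _)] at this)
  -- basic facts about the sampling map on [0, t]
  have hπfacts : ∀ s ∈ Ioc (0:ℝ) t, 0 ≤ piD δ s ∧ 0 ≤ s - piD δ s ∧ s - piD δ s < δ := by
    intro s hs
    exact ⟨piD_nonneg hδ (le_of_lt hs.1), by linarith [piD_le hδ s], sub_piD_lt hδ s⟩
  -- increments of x
  have hxab : ∀ a b : ℝ, 0 ≤ a → a ≤ b → |x b - x a| ≤ MF * (b - a) := by
    intro a b ha hab
    have hb : 0 ≤ b := le_trans ha hab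
    have heq : x b - x a = ∫ u in a..b, g u := by
      rw [hx b hb, hx a ha, add_sub_add_left_eq_sub]
      rw [← intervalIntegral.integral_interval_sub_left (hii b hb) (hii a ha)]
    rw [heq]
    have h1 : ‖∫ u in a..b, g u‖ ≤ MF * |b - a| := by
      apply intervalIntegral.norm_integral_le_of_norm_le_const
      intro u hu
      rw [uIoc_of_le hab] at hu
      rw [Real.norm_eq_abs]
      exact hMF (x u) (hxbd u (le_trans ha (le_of_lt hu.1)))
    rwa [Real.norm_eq_abs, abs_of_nonneg (by linarith : (0:ℝ) ≤ b - a)] at h1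
  -- measurability providers on (0, t]
  have hxaesm : AEStronglyMeasurable x (volume.restrict (Ioc (0:ℝ) t)) :=
    (hxc.mono hIocIci).aestronglyMeasurable measurableSet_Ioc
  have hmfloor : Measurable fun s : ℝ => (⌊s/δ⌋ : ℤ) :=
    Int.measurable_floor.comp (measurable_id.div_const δ)
  have hmxπ : Measurable fun s : ℝ => x (piD δ s) :=
    (measurable_from_top (f := fun k : ℤ => x (δ * k))).comp hmfloor
  have hmπ : Measurable (piD δ) :=
    ((measurable_from_top (f := fun k : ℤ => ((k:ℝ)))).comp hmfloor).const_mul δ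
  have hmsπ : Measurable fun s : ℝ => s - piD δ s := measurable_id.sub hmπ
  have hEaesm : AEStronglyMeasurable (fun s => Real.exp (A s))
      (volume.restrict (Ioc (0:ℝ) t)) :=
    (hEc.mono Ioc_subset_Icc_self).aestronglyMeasurable measurableSet_Ioc
  have hκxaesm : AEStronglyMeasurable (fun s => deriv κ (x s))
      (volume.restrict (Ioc (0:ℝ) t)) :=
    hκ'c.comp_aestronglyMeasurable hxaesm
  have hfxaesm : AEStronglyMeasurable (fun s => f (x s))
      (volume.restrict (Ioc (0:ℝ) t)) :=
    hfc.comp_aestronglyMeasurable hxaesm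
  have hfxπaesm : AEStronglyMeasurable (fun s => f (x (piD δ s)))
      (volume.restrict (Ioc (0:ℝ) t)) :=
    (hfc.measurable.comp hmxπ).aestronglyMeasurable.restrict
  -- the three pieces
  set G₁ : ℝ → ℝ := fun s => Real.exp (A s) *
    ((1/ε) * (s - piD δ s) * (deriv κ (x s) * (f (x (piD δ s)) - f (x s)))) with hG₁
  set G₂ : ℝ → ℝ := fun s => Real.exp (A s) *
    ((δ/ε - c) * ((s - piD δ s)/δ) * (deriv κ (x s) * f (x s))) with hG₂
  set G₃ : ℝ → ℝ := fun s => Real.exp (A s) *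
    (c * (deriv κ (x s) * f (x s)) * ((s - piD δ s)/δ - 1/2)) with hG₃
  have hdecomp : ∀ s : ℝ,
      Real.exp (∫ u in s..t, (deriv f (x u) + deriv κ (x u))) *
        ((1 / ε) * deriv κ (x s) * f (x (piD δ s)) * (s - piD δ s)
          - (c / 2) * deriv κ (x s) * f (x s))
      = G₁ s + G₂ s + G₃ s := by
    intro s
    rw [hG₁, hG₂, hG₃]
    have : Real.exp (∫ u in s..t, (deriv f (x u) + deriv κ (x u))) = Real.exp (A s) := by
      rw [hA]
    rw [this]
    field_simp
    ring
  -- bounds for the pieces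
  have hb₁ : ∀ s ∈ Ioc (0:ℝ) t, |G₁ s| ≤ (C₁ * (δ^2/ε)) * Real.exp (A s) := by
    intro s hs
    obtain ⟨hπ0, hsπ0, hsπδ⟩ := hπfacts s hs
    have hs0 : (0:ℝ) ≤ s := le_of_lt hs.1
    have h1 : |deriv κ (x s)| ≤ Mκ := hMκ _ (hxbd s hs0)
    have h2 : |f (x (piD δ s)) - f (x s)| ≤ Lf * (MF * δ) := by
      calc |f (x (piD δ s)) - f (x s)| ≤ Lf * |x (piD δ s) - x s| :=
            hLf _ _ (hxbd _ hπ0) (hxbd _ hs0)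
      _ ≤ Lf * (MF * δ) := by
            apply mul_le_mul_of_nonneg_left ?_ hLf0
            have := hxab (piD δ s) s hπ0 (by linarith)
            rw [abs_sub_comm]
            apply le_trans this
            apply mul_le_mul_of_nonneg_left (by linarith) hMF0
    have h3 : |(1/ε) * (s - piD δ s) * (deriv κ (x s) * (f (x (piD δ s)) - f (x s)))|
        ≤ (1/ε) * δ * (Mκ * (Lf * (MF * δ))) := by
      rw [abs_mul, abs_mul, abs_mul]
      have e1 : |1/ε| = 1/ε := abs_of_pos (by positivity)
      have e2 : |s - piD δ s| ≤ δ := by rw [abs_of_nonneg hsπ0]; linarith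
      rw [e1]
      apply mul_le_mul
      · apply mul_le_mul_of_nonneg_left e2 (by positivity)
      · exact mul_le_mul h1 h2 (abs_nonneg _) hMκ0
      · positivity
      · positivity
    rw [hG₁, abs_mul, abs_of_pos (Real.exp_pos _), mul_comm]
    apply mul_le_mul_of_nonneg_right ?_ (hEnn s)
    apply le_trans h3
    apply le_of_eq
    rw [hC₁def]
    field_simp
  have hb₂ : ∀ s ∈ Ioc (0:ℝ) t, |G₂ s| ≤ (|δ/ε - c| * C₂) * Real.exp (A s) := by
    intro s hs
    obtain ⟨hπ0, hsπ0, hsπδ⟩ := hπfacts s hs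
    have hs0 : (0:ℝ) ≤ s := le_of_lt hs.1
    have h1 : |deriv κ (x s) * f (x s)| ≤ Mκ * Mf := by
      rw [abs_mul]
      exact mul_le_mul (hMκ _ (hxbd s hs0)) (hMf _ (hxbd s hs0)) (abs_nonneg _) hMκ0
    have h2 : |(s - piD δ s)/δ| ≤ 1 := by
      rw [abs_div, abs_of_pos hδ, div_le_one hδ, abs_of_nonneg hsπ0]
      linarith
    rw [hG₂, abs_mul, abs_of_pos (Real.exp_pos _), mul_comm]
    apply mul_le_mul_of_nonneg_right ?_ (hEnn s)
    rw [abs_mul, abs_mul]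
    calc |δ/ε - c| * |(s - piD δ s)/δ| * |deriv κ (x s) * f (x s)|
        ≤ |δ/ε - c| * 1 * (Mκ * Mf) := by
          apply mul_le_mul ?_ h1 (abs_nonneg _) (by positivity)
          exact mul_le_mul_of_nonneg_left h2 (abs_nonneg _)
    _ = |δ/ε - c| * C₂ := by rw [hC₂def]; ring
  -- integrability of the pieces
  have hG₁ii : IntervalIntegrable G₁ volume 0 t := by
    apply ii_of_bdd (M := ME * ((C₁ * (δ^2/ε)))) ht
    · rw [hG₁]
      apply AEStronglyMeasurable.mul hEaesm
      apply AEStronglyMeasurable.mul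
      · exact ((hmsπ.const_mul (1/ε)).aestronglyMeasurable.restrict).congr
          (Filter.Eventually.of_forall (fun s => by ring))
      · exact hκxaesm.mul (hfxπaesm.sub hfxaesm)
    · intro s hs
      calc |G₁ s| ≤ (C₁ * (δ^2/ε)) * Real.exp (A s) := hb₁ s hs
      _ ≤ (C₁ * (δ^2/ε)) * ME := by
            apply mul_le_mul_of_nonneg_left (hME' s hs) (by positivity)
      _ = ME * (C₁ * (δ^2/ε)) := by ring
  have hG₂ii : IntervalIntegrable G₂ volume 0 t := by
    apply ii_of_bdd (M := ME * (|δ/ε - c| * C₂)) ht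
    · rw [hG₂]
      apply AEStronglyMeasurable.mul hEaesm
      apply AEStronglyMeasurable.mul
      · exact (((hmsπ.div_const δ).const_mul (δ/ε - c)).aestronglyMeasurable.restrict)
      · exact hκxaesm.mul hfxaesm
    · intro s hs
      calc |G₂ s| ≤ (|δ/ε - c| * C₂) * Real.exp (A s) := hb₂ s hs
      _ ≤ (|δ/ε - c| * C₂) * ME := by
            apply mul_le_mul_of_nonneg_left (hME' s hs) (by positivity)
      _ = ME * (|δ/ε - c| * C₂) := by ring
  have hG₃ii : IntervalIntegrable G₃ volume 0 t := by
    apply ii_of_bdd (M := ME * (c * (Mκ * Mf) * (1/2))) ht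
    · rw [hG₃]
      apply AEStronglyMeasurable.mul hEaesm
      apply AEStronglyMeasurable.mul
      · exact (hκxaesm.mul hfxaesm).const_mul c
      · exact (((hmsπ.div_const δ).sub_const (1/2)).aestronglyMeasurable.restrict)
    · intro s hs
      obtain ⟨hπ0, hsπ0, hsπδ⟩ := hπfacts s hs
      have hs0 : (0:ℝ) ≤ s := le_of_lt hs.1
      have h1 : |deriv κ (x s) * f (x s)| ≤ Mκ * Mf := by
        rw [abs_mul]
        exact mul_le_mul (hMκ _ (hxbd s hs0)) (hMf _ (hxbd s hs0)) (abs_nonneg _) hMκ0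
      have h2 : |(s - piD δ s)/δ - 1/2| ≤ 1/2 := by
        rw [abs_le]
        constructor
        · have : 0 ≤ (s - piD δ s)/δ := by positivity
          linarith
        · have : (s - piD δ s)/δ ≤ 1 := by
            rw [div_le_one hδ]; linarith
          linarith
      rw [hG₃, abs_mul, abs_of_pos (Real.exp_pos _), abs_mul, abs_mul, abs_of_nonneg hc]
      have goal1 : Real.exp (A s) * (c * |deriv κ (x s) * f (x s)| * |(s - piD δ s)/δ - 1/2|)
          ≤ ME * (c * (Mκ * Mf) * (1/2)) := by
        apply mul_le_mul (hME' s hs) ?_ (by positivity) hME0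
        apply mul_le_mul ?_ h2 (abs_nonneg _) (by positivity)
        exact mul_le_mul_of_nonneg_left h1 hc
      exact goal1
  -- the easy integral bounds
  have hJ₁ : |∫ s in (0:ℝ)..t, G₁ s| ≤ (C₁ * (δ^2/ε)) * Cstar :=
    int_bd ht (by positivity) _ _ hEnn hb₁ hEii hECstar
  have hJ₂ : |∫ s in (0:ℝ)..t, G₂ s| ≤ (|δ/ε - c| * C₂) * Cstar :=
    int_bd ht (by positivity) _ _ hEnn hb₂ hEii hECstar
  have hJ₃ : |∫ s in (0:ℝ)..t, G₃ s| ≤ c * δ * C₄ := by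
    set h0 : ℝ → ℝ := fun s => deriv κ (x s) * f (x s) with hh0
    set ψ : ℝ → ℝ := fun s => Real.exp (A s) * h0 s with hψdef
    set ψ' : ℝ → ℝ := fun s => Real.exp (A s) * -w s * h0 s +
      Real.exp (A s) * (deriv (deriv κ) (x s) * g s * f (x s) +
        deriv κ (x s) * (deriv f (x s) * g s)) with hψ'def
    set Fp : ℝ → ℝ := fun s => (s - piD δ s)/δ - 1/2 with hFp
    have hC₃0 : 0 ≤ C₃ := by rw [hC₃def, hMwdef]; positivity
    have hh0c : ContinuousOn h0 (Icc 0 t) :=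
      (hκ'c.comp_continuousOn (hxc.mono hIccIci)).mul (hfc.comp_continuousOn (hxc.mono hIccIci))
    have hψc : ContinuousOn ψ (Icc 0 t) := hEc.mul hh0c
    have hgbd : ∀ s : ℝ, 0 ≤ s → |g s| ≤ MF := fun s hs => hMF _ (hxbd s hs)
    have hh0bd : ∀ s : ℝ, 0 ≤ s → |h0 s| ≤ Mκ * Mf := by
      intro s hs
      simp only [hh0]
      rw [abs_mul]
      exact mul_le_mul (hMκ _ (hxbd s hs)) (hMf _ (hxbd s hs)) (abs_nonneg _) hMκ0
    have hψd : ∀ s ∈ Ioo 0 t, HasDerivAt ψ (ψ' s) s := by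
      intro s hs
      have hxd : HasDerivAt x (g s) s := hder s hs.1
      have hE : HasDerivAt (fun r => Real.exp (A r)) (Real.exp (A s) * -w s) s := by
        simpa using (hAd s hs).exp
      have hκx : HasDerivAt (fun r => deriv κ (x r)) (deriv (deriv κ) (x s) * g s) s :=
        (hκd2 (x s)).hasDerivAt.comp s hxd
      have hfx : HasDerivAt (fun r => f (x r)) (deriv f (x s) * g s) s :=
        (hfd (x s)).hasDerivAt.comp s hxd
      have hh0d : HasDerivAt h0 (deriv (deriv κ) (x s) * g s * f (x s) +
          deriv κ (x s) * (deriv f (x s) * g s)) s := hκx.mul hfx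
      exact hE.mul hh0d
    have hψ'bd : ∀ s ∈ Ioc (0:ℝ) t, |ψ' s| ≤ C₃ * Real.exp (A s) := by
      intro s hs
      have hs0 : (0:ℝ) ≤ s := le_of_lt hs.1
      have h1 : |Real.exp (A s) * -w s * h0 s| ≤ Real.exp (A s) * ((Mf' + Mκ) * (Mκ * Mf)) := by
        rw [abs_mul, abs_mul, abs_of_pos (Real.exp_pos _), abs_neg, mul_assoc]
        apply mul_le_mul_of_nonneg_left ?_ (hEnn s)
        exact mul_le_mul (hwbd s hs0) (hh0bd s hs0) (abs_nonneg _) (by linarith)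
      have h2 : |Real.exp (A s) * (deriv (deriv κ) (x s) * g s * f (x s) +
          deriv κ (x s) * (deriv f (x s) * g s))|
          ≤ Real.exp (A s) * (K * MF * Mf + Mκ * (Mf' * MF)) := by
        rw [abs_mul, abs_of_pos (Real.exp_pos _)]
        apply mul_le_mul_of_nonneg_left ?_ (hEnn s)
        have t1 : |deriv (deriv κ) (x s) * g s * f (x s)| ≤ K * MF * Mf := by
          rw [abs_mul, abs_mul]
          apply mul_le_mul ?_ (hMf _ (hxbd s hs0)) (abs_nonneg _) (by positivity)
          exact mul_le_mul (hK _) (hgbd s hs0) (abs_nonneg _) hK0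
        have t2 : |deriv κ (x s) * (deriv f (x s) * g s)| ≤ Mκ * (Mf' * MF) := by
          rw [abs_mul, abs_mul]
          apply mul_le_mul (hMκ _ (hxbd s hs0)) ?_ (by positivity) hMκ0
          exact mul_le_mul (hMf' _ (hxbd s hs0)) (hgbd s hs0) (abs_nonneg _) hMf'0
        calc |deriv (deriv κ) (x s) * g s * f (x s) +
            deriv κ (x s) * (deriv f (x s) * g s)|
            ≤ |deriv (deriv κ) (x s) * g s * f (x s)| +
              |deriv κ (x s) * (deriv f (x s) * g s)| := abs_add_le _ _
        _ ≤ K * MF * Mf + Mκ * (Mf' * MF) := add_le_add t1 t2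
      calc |ψ' s| ≤ |Real.exp (A s) * -w s * h0 s| +
            |Real.exp (A s) * (deriv (deriv κ) (x s) * g s * f (x s) +
              deriv κ (x s) * (deriv f (x s) * g s))| := by
            rw [hψ'def]; exact abs_add_le _ _
      _ ≤ Real.exp (A s) * ((Mf' + Mκ) * (Mκ * Mf)) +
            Real.exp (A s) * (K * MF * Mf + Mκ * (Mf' * MF)) := add_le_add h1 h2
      _ = C₃ * Real.exp (A s) := by rw [hC₃def, hMwdef]; ring
    -- measurability
    have hwaesm : AEStronglyMeasurable w (volume.restrict (Ioc (0:ℝ) t)) :=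
      (hwc.mono hIocIci).aestronglyMeasurable measurableSet_Ioc
    have hh0aesm : AEStronglyMeasurable h0 (volume.restrict (Ioc (0:ℝ) t)) :=
      hκxaesm.mul hfxaesm
    have hddkaesm : AEStronglyMeasurable (fun s => deriv (deriv κ) (x s))
        (volume.restrict (Ioc (0:ℝ) t)) :=
      ((measurable_deriv (deriv κ)).comp_aemeasurable hxaesm.aemeasurable).aestronglyMeasurable
    have hgaesm : AEStronglyMeasurable g (volume.restrict (Ioc (0:ℝ) t)) :=
      (hfc.comp_aestronglyMeasurable hxaesm).add (hκc.comp_aestronglyMeasurable hxaesm)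
    have hf'xaesm : AEStronglyMeasurable (fun s => deriv f (x s))
        (volume.restrict (Ioc (0:ℝ) t)) :=
      hf'c.comp_aestronglyMeasurable hxaesm
    have hψaesm : AEStronglyMeasurable ψ (volume.restrict (Ioc (0:ℝ) t)) :=
      hEaesm.mul hh0aesm
    have hψ'aesm : AEStronglyMeasurable ψ' (volume.restrict (Ioc (0:ℝ) t)) := by
      rw [hψ'def]
      exact ((hEaesm.mul hwaesm.neg).mul hh0aesm).add
        (hEaesm.mul (((hddkaesm.mul hgaesm).mul hfxaesm).add
          (hκxaesm.mul (hf'xaesm.mul hgaesm))))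
    have hΦaesm : AEStronglyMeasurable (Phi δ) (volume.restrict (Ioc (0:ℝ) t)) :=
      (phi_continuous hδ).aestronglyMeasurable.restrict
    have hFpaesm : AEStronglyMeasurable Fp (volume.restrict (Ioc (0:ℝ) t)) :=
      ((hmsπ.div_const δ).sub_const (1/2)).aestronglyMeasurable.restrict
    have hFpbd : ∀ s ∈ Ioc (0:ℝ) t, |Fp s| ≤ 1/2 := by
      intro s hs
      obtain ⟨hπ0, hsπ0, hsπδ⟩ := hπfacts s hs
      rw [hFp, abs_le]
      constructor
      · have : 0 ≤ (s - piD δ s)/δ := by positivity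
        linarith
      · have : (s - piD δ s)/δ ≤ 1 := by rw [div_le_one hδ]; linarith
        linarith
    -- integrability of the two parts
    have hint1 : IntervalIntegrable (fun s => ψ' s * Phi δ s) volume 0 t := by
      apply ii_of_bdd (M := C₃ * ME * (δ/2)) ht (hψ'aesm.mul hΦaesm)
      intro s hs
      show |ψ' s * Phi δ s| ≤ C₃ * ME * (δ/2)
      rw [abs_mul]
      calc |ψ' s| * |Phi δ s| ≤ (C₃ * Real.exp (A s)) * (δ/2) :=
            mul_le_mul (hψ'bd s hs) (phi_abs_le hδ s) (abs_nonneg _)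
              (by positivity)
      _ ≤ (C₃ * ME) * (δ/2) := by
            apply mul_le_mul_of_nonneg_right ?_ (by positivity)
            exact mul_le_mul_of_nonneg_left (hME' s hs) hC₃0
      _ = C₃ * ME * (δ/2) := by ring
    have hint2 : IntervalIntegrable (fun s => ψ s * Fp s) volume 0 t := by
      apply ii_of_bdd (M := ME * (Mκ * Mf) * (1/2)) ht (hψaesm.mul hFpaesm)
      intro s hs
      show |ψ s * Fp s| ≤ ME * (Mκ * Mf) * (1/2)
      rw [abs_mul]
      have hψbd : |ψ s| ≤ ME * (Mκ * Mf) := by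
        rw [hψdef]
        simp only []
        rw [abs_mul, abs_of_pos (Real.exp_pos _)]
        exact mul_le_mul (hME' s hs) (hh0bd s (le_of_lt hs.1)) (abs_nonneg _) hME0
      calc |ψ s| * |Fp s| ≤ (ME * (Mκ * Mf)) * (1/2) :=
            mul_le_mul hψbd (hFpbd s hs) (abs_nonneg _) (by positivity)
      _ = ME * (Mκ * Mf) * (1/2) := by ring
    -- FTC / integration by parts
    have hPcont : ContinuousOn (fun r => ψ r * Phi δ r) (Icc 0 t) :=
      hψc.mul (phi_continuous hδ).continuousOn
    have hP : ∀ s ∈ Ioo 0 t, HasDerivWithinAt (fun r => ψ r * Phi δ r)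
        (ψ' s * Phi δ s + ψ s * Fp s) (Ioi s) s := by
      intro s hs
      exact ((hψd s hs).hasDerivWithinAt).mul (phi_hasDerivWithinAt hδ s)
    have hFTC : (∫ s in (0:ℝ)..t, (ψ' s * Phi δ s + ψ s * Fp s))
        = ψ t * Phi δ t - ψ 0 * Phi δ 0 :=
      intervalIntegral.integral_eq_sub_of_hasDeriv_right_of_le ht hPcont hP
        (hint1.add hint2)
    have hsplit3 : (∫ s in (0:ℝ)..t, ψ s * Fp s)
        = (ψ t * Phi δ t - ψ 0 * Phi δ 0) - ∫ s in (0:ℝ)..t, ψ' s * Phi δ s := by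
      rw [← hFTC, intervalIntegral.integral_add hint1 hint2]
      ring
    have hG3eq : (∫ s in (0:ℝ)..t, G₃ s) = c * ∫ s in (0:ℝ)..t, ψ s * Fp s := by
      rw [← intervalIntegral.integral_const_mul]
      apply intervalIntegral.integral_congr
      intro s _
      simp only [hG₃, hψdef, hh0, hFp]
      ring
    have hψt : |ψ t * Phi δ t| ≤ (Mκ * Mf) * (δ/2) := by
      rw [abs_mul]
      apply mul_le_mul ?_ (phi_abs_le hδ t) (abs_nonneg _) (by positivity)
      rw [hψdef]
      simp only []
      rw [hAt, Real.exp_zero, one_mul]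
      exact hh0bd t ht
    have hψ0 : ψ 0 * Phi δ 0 = 0 := by rw [phi_zero]; ring
    have hIψ'Φ : |∫ s in (0:ℝ)..t, ψ' s * Phi δ s| ≤ (C₃ * (δ/2)) * Cstar := by
      apply int_bd ht (by positivity) _ _ hEnn ?_ hEii hECstar
      intro s hs
      rw [abs_mul]
      calc |ψ' s| * |Phi δ s| ≤ (C₃ * Real.exp (A s)) * (δ/2) :=
            mul_le_mul (hψ'bd s hs) (phi_abs_le hδ s) (abs_nonneg _) (by positivity)
      _ = (C₃ * (δ/2)) * Real.exp (A s) := by ring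
    have hIψFp : |∫ s in (0:ℝ)..t, ψ s * Fp s| ≤ (Mκ * Mf) * (δ/2) + (C₃ * (δ/2)) * Cstar := by
      rw [hsplit3, hψ0, sub_zero]
      have habs3 : |ψ t * Phi δ t - ∫ s in (0:ℝ)..t, ψ' s * Phi δ s|
          ≤ |ψ t * Phi δ t| + |∫ s in (0:ℝ)..t, ψ' s * Phi δ s| := by
        rw [sub_eq_add_neg]
        refine (abs_add_le _ _).trans ?_
        rw [abs_neg]
      linarith
    rw [hG3eq, abs_mul, abs_of_nonneg hc]
    calc c * |∫ s in (0:ℝ)..t, ψ s * Fp s|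
        ≤ c * ((Mκ * Mf) * (δ/2) + (C₃ * (δ/2)) * Cstar) :=
          mul_le_mul_of_nonneg_left hIψFp hc
    _ = c * δ * C₄ := by rw [hC₄def]; ring
  -- assembling
  have hsplit : (∫ s in (0:ℝ)..t,
      Real.exp (∫ u in s..t, (deriv f (x u) + deriv κ (x u))) *
        ((1 / ε) * deriv κ (x s) * f (x (piD δ s)) * (s - piD δ s)
          - (c / 2) * deriv κ (x s) * f (x s)))
      = (∫ s in (0:ℝ)..t, G₁ s) + (∫ s in (0:ℝ)..t, G₂ s) + (∫ s in (0:ℝ)..t, G₃ s) := by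
    rw [← intervalIntegral.integral_add hG₁ii hG₂ii,
      ← intervalIntegral.integral_add (hG₁ii.add hG₂ii) hG₃ii]
    apply intervalIntegral.integral_congr
    intro s _
    exact hdecomp s
  set uu := |δ/ε - c| with hu
  set vv := δ^2/ε with hv
  have hu0 : 0 ≤ uu := abs_nonneg _
  have hv0 : 0 ≤ vv := by positivity
  have hcd : c * δ ≤ uu + vv := by
    have h1 : c * δ = δ * (c - δ/ε) + δ^2/ε := by field_simp; ring
    have h2 : δ * (c - δ/ε) ≤ |δ * (c - δ/ε)| := le_abs_self _
    have h3 : |δ * (c - δ/ε)| = δ * |δ/ε - c| := by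
      rw [abs_mul, abs_of_pos hδ, abs_sub_comm]
    have h4 : δ * |δ/ε - c| ≤ |δ/ε - c| := by
      nlinarith [abs_nonneg (δ/ε - c)]
    rw [hu, hv]; linarith
  have hJ : |∫ s in (0:ℝ)..t,
      Real.exp (∫ u in s..t, (deriv f (x u) + deriv κ (x u))) *
        ((1 / ε) * deriv κ (x s) * f (x (piD δ s)) * (s - piD δ s)
          - (c / 2) * deriv κ (x s) * f (x s))| ≤ C₅ * (uu + vv) := by
    rw [hsplit]
    have habs : |(∫ s in (0:ℝ)..t, G₁ s) + (∫ s in (0:ℝ)..t, G₂ s) + (∫ s in (0:ℝ)..t, G₃ s)|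
        ≤ |∫ s in (0:ℝ)..t, G₁ s| + |∫ s in (0:ℝ)..t, G₂ s| + |∫ s in (0:ℝ)..t, G₃ s| :=
      (abs_add_le _ _).trans (add_le_add_left (abs_add_le _ _) _)
    have hC₁C : (0:ℝ) ≤ C₁ * Cstar := by positivity
    have hC₂C : (0:ℝ) ≤ C₂ * Cstar := by positivity
    have huv0 : (0:ℝ) ≤ uu + vv := by linarith
    have b1 : |∫ s in (0:ℝ)..t, G₁ s| ≤ (C₁*Cstar) * (uu+vv) := by
      refine le_trans hJ₁ ?_
      have e : (C₁ * (δ^2/ε)) * Cstar = (C₁*Cstar) * vv := by rw [hv]; ring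
      rw [e]
      exact mul_le_mul_of_nonneg_left (by linarith) hC₁C
    have b2 : |∫ s in (0:ℝ)..t, G₂ s| ≤ (C₂*Cstar) * (uu+vv) := by
      refine le_trans hJ₂ ?_
      have e : (|δ/ε - c| * C₂) * Cstar = (C₂*Cstar) * uu := by rw [hu]; ring
      rw [e]
      exact mul_le_mul_of_nonneg_left (by linarith) hC₂C
    have b3 : |∫ s in (0:ℝ)..t, G₃ s| ≤ C₄ * (uu+vv) := by
      refine le_trans hJ₃ ?_
      calc c * δ * C₄ ≤ (uu+vv) * C₄ := mul_le_mul_of_nonneg_right hcd hC₄0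
      _ = C₄ * (uu+vv) := by ring
    refine le_trans habs ?_
    have e : C₅ * (uu+vv) = (C₁*Cstar)*(uu+vv) + (C₂*Cstar)*(uu+vv) + C₄*(uu+vv)
        + (uu+vv) := by rw [hC₅def]; ring
    rw [e]
    linarith
  -- final arithmetic
  have hpow : |∫ s in (0:ℝ)..t,
      Real.exp (∫ u in s..t, (deriv f (x u) + deriv κ (x u))) *
        ((1 / ε) * deriv κ (x s) * f (x (piD δ s)) * (s - piD δ s)
          - (c / 2) * deriv κ (x s) * f (x s))| ^ p ≤ (C₅ * (uu + vv))^p :=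
    pow_le_pow_left₀ (abs_nonneg _) hJ p
  have hsum : (uu + vv)^p ≤ 2^p * (uu^p + vv^p) := by
    rcases le_total uu vv with h | h
    · calc (uu + vv)^p ≤ (2*vv)^p := pow_le_pow_left₀ (by linarith) (by linarith) p
      _ = 2^p * vv^p := mul_pow 2 vv p
      _ ≤ 2^p * (uu^p + vv^p) := by
          apply mul_le_mul_of_nonneg_left ?_ (by positivity)
          have := pow_nonneg hu0 p
          linarith
    · calc (uu + vv)^p ≤ (2*uu)^p := pow_le_pow_left₀ (by linarith) (by linarith) p
      _ = 2^p * uu^p := mul_pow 2 uu p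
      _ ≤ 2^p * (uu^p + vv^p) := by
          apply mul_le_mul_of_nonneg_left ?_ (by positivity)
          have := pow_nonneg hv0 p
          linarith
  have hvp : vv^p = δ^(2*p)/ε^p := by
    rw [hv, div_pow, pow_mul]
  apply le_trans hpow
  rw [mul_pow]
  calc C₅^p * (uu+vv)^p ≤ C₅^p * (2^p * (uu^p + vv^p)) := by
        apply mul_le_mul_of_nonneg_left hsum (by positivity)
  _ = (C₅^p * 2^p) * uu^p + (C₅^p * 2^p) * vv^p := by ring
  _ ≤ (C₅^p * 2^p + 1) * uu^p + (C₅^p * 2^p + 1) * vv^p := by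
        have h1 : (C₅^p * 2^p) * uu^p ≤ (C₅^p * 2^p + 1) * uu^p :=
          mul_le_mul_of_nonneg_right (by linarith) (pow_nonneg hu0 p)
        have h2 : (C₅^p * 2^p) * vv^p ≤ (C₅^p * 2^p + 1) * vv^p :=
          mul_le_mul_of_nonneg_right (by linarith) (pow_nonneg hv0 p)
        linarith
  _ = (C₅^p * 2^p + 1) * |δ/ε - c|^p + (C₅^p * 2^p + 1) * δ^(2*p)/ε^p := by
        rw [hvp, hu]
        ring
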